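/- Let D > 0, n ≥ 1, z_1 ≥ ... ≥ z_n ≥ 0 with z_1 > 0, and let n*, S, f_i be the threshold index, winner-bid sum, and allocation probabilities of the optimal Knightian allocation function. Then for every i ∈ {1,...,n}: Σ_{j=1}^n f_j(z)·z_j + D·f_i(z)·z_i ≥ (z_i/n)·(n+D). -/

import Mathlib

theorem stmt8 (D : ℝ) (hD : 0 < D) (n : ℕ) (hn : 1 ≤ n)
    (z : ℕ → ℝ)
    (hsort : ∀ i j, 1 ≤ i → i ≤ j → j ≤ n → z j ≤ z i)
    (hnn : ∀ i, 1 ≤ i → i ≤ n → 0 ≤ z i)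
    (hpos : 0 < z 1)
    (m : ℕ) (hm1 : 1 ≤ m) (hmn : m ≤ n)
    (hwin : ∀ i, 1 ≤ i → i ≤ m → z i > (∑ j ∈ Finset.Icc 1 m, z j) / ((m : ℝ) + D))
    (hlose : ∀ i, m < i → i ≤ n → z i ≤ (∑ j ∈ Finset.Icc 1 m, z j) / ((m : ℝ) + D)) :
    ∀ i, 1 ≤ i → i ≤ n →
      (∑ j ∈ Finset.Icc 1 n,
        (if j ≤ m then
          (1 / (n : ℝ)) * (((n : ℝ) + D) / ((m : ℝ) + D)) *
            ((z j * ((m : ℝ) + D) - ∑ k ∈ Finset.Icc 1 m, z k) / (z j * D))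
        else 0) * z j)
      + D * (if i ≤ m then
          (1 / (n : ℝ)) * (((n : ℝ) + D) / ((m : ℝ) + D)) *
            ((z i * ((m : ℝ) + D) - ∑ k ∈ Finset.Icc 1 m, z k) / (z i * D))
        else 0) * z i
      ≥ (z i / (n : ℝ)) * ((n : ℝ) + D) := by
  intro i hi1 hin
  set S : ℝ := ∑ k ∈ Finset.Icc 1 m, z k with hSdef
  have hnpos : (0:ℝ) < (n:ℝ) := by exact_mod_cast Nat.lt_of_lt_of_le Nat.zero_lt_one hn
  have hmD : (0:ℝ) < (m:ℝ) + D := by positivity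
  have hS0 : 0 ≤ S := Finset.sum_nonneg (fun j hj => by
    have := Finset.mem_Icc.mp hj
    exact hnn j this.1 (le_trans this.2 hmn))
  have hzpos : ∀ j, 1 ≤ j → j ≤ m → 0 < z j := fun j h1 h2 =>
    lt_of_le_of_lt (div_nonneg hS0 hmD.le) (hwin j h1 h2)
  set c : ℝ := (1 / (n : ℝ)) * (((n : ℝ) + D) / ((m : ℝ) + D)) with hc
  have hcpos : 0 < c := by positivity
  have hn0 : (n:ℝ) ≠ 0 := hnpos.ne'
  have hmD0 : ((m:ℝ) + D) ≠ 0 := hmD.ne'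
  have hD0 : D ≠ 0 := hD.ne'
  have hsum : (∑ j ∈ Finset.Icc 1 n,
      (if j ≤ m then c * ((z j * ((m : ℝ) + D) - S) / (z j * D)) else 0) * z j) = c * S := by
    rw [← Finset.sum_subset (Finset.Icc_subset_Icc_right hmn)
      (fun x _ hx => by
        have : ¬ x ≤ m := fun h => hx (Finset.mem_Icc.mpr ⟨(Finset.mem_Icc.mp ‹x ∈ Finset.Icc 1 n›).1, h⟩)
        simp [this])]
    have key : ∀ j ∈ Finset.Icc 1 m,
        (if j ≤ m then c * ((z j * ((m : ℝ) + D) - S) / (z j * D)) else 0) * z j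
          = c / D * (z j * ((m:ℝ) + D)) - c / D * S := by
      intro j hj
      obtain ⟨h1, h2⟩ := Finset.mem_Icc.mp hj
      have hz : z j ≠ 0 := (hzpos j h1 h2).ne'
      rw [if_pos h2]
      field_simp
    rw [Finset.sum_congr rfl key, Finset.sum_sub_distrib, ← Finset.mul_sum,
      Finset.sum_const, Nat.card_Icc]
    have : (∑ j ∈ Finset.Icc 1 m, z j * ((m:ℝ) + D)) = S * ((m:ℝ) + D) := by
      rw [← Finset.sum_mul]
    rw [this]
    simp only [Nat.add_sub_cancel, nsmul_eq_mul]
    field_simp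
    ring
  rw [hsum]
  by_cases him : i ≤ m
  · rw [if_pos him]
    have hz : z i ≠ 0 := (hzpos i hi1 him).ne'
    have : c * S + D * (c * ((z i * ((m : ℝ) + D) - S) / (z i * D))) * z i
        = z i / (n:ℝ) * ((n:ℝ) + D) := by
      rw [hc]
      field_simp
      ring
    rw [this]
  · rw [if_neg him]
    simp only [mul_zero, zero_mul, add_zero]
    have hzi : z i ≤ S / ((m:ℝ) + D) := hlose i (lt_of_not_ge him) hin
    have : z i / (n:ℝ) * ((n:ℝ) + D) ≤ (S / ((m:ℝ) + D)) / (n:ℝ) * ((n:ℝ) + D) := by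
      gcongr
    calc z i / (n:ℝ) * ((n:ℝ) + D) ≤ (S / ((m:ℝ) + D)) / (n:ℝ) * ((n:ℝ) + D) := this
      _ = c * S := by rw [hc]; field_simp
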